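/- Two matroids M₁ and M₂ on nonempty finite ground sets are isomorphic if and only if |Hom(M₁, L)| = |Hom(M₂, L)| for every matroid L on a nonempty finite ground set. -/

import Mathlib

/-!
STATEMENT 18: Two matroids M₁ and M₂ on nonempty finite ground sets are isomorphic if
and only if |Hom(M₁, L)| = |Hom(M₂, L)| for every matroid L on a nonempty finite
ground set.

We model a matroid on a nonempty finite ground set as a Mathlib `Matroid α` over a
nonempty finite type `α`, with ground set all of `α`.  Strong maps are modelled as in
the paper via functions on the ground sets with a loop `e = none : Option _` adjoined:
the flats of M∘ (M with the loop e adjoined) are exactly the sets F ∪ {e} for F a flat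
of M, so a strong map M → N is a function φ : Option α → Option β with φ(none) = none
such that for every flat F of N, the trace on α of the φ-preimage of F ∪ {none} is a
flat of M.  Hom(M, N) is the set of strong maps M → N.
-/

/-- Matroid isomorphism (for matroids whose ground set is the whole type). -/
def MatroidIso {α β : Type} (M : Matroid α) (N : Matroid β) : Prop :=
  ∃ e : α ≃ β, ∀ B : Set α, M.IsBase B ↔ N.IsBase (e '' B)

/-- A strong map `M → N`: a function `φ` on the ground sets with the loop `e = none`
adjoined, fixing `e`, such that the preimage of every flat of `N∘` is a flat of `M∘`. -/
def IsStrongMap {α β : Type} (M : Matroid α) (N : Matroid β)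
    (φ : Option α → Option β) : Prop :=
  φ none = none ∧
  ∀ F : Set β, N.IsFlat F →
    M.IsFlat {x : α | φ (some x) ∈ insert none (Option.some '' F)}

open Set Matroid

namespace StrongAux

variable {α β γ : Type}


lemma closure_flat' (M : Matroid α) (X : Set α) : M.IsFlat (M.closure X) := by
  rw [Matroid.closure_def, sInter_eq_iInter]
  have : Nonempty {F // F ∈ {F | M.IsFlat F ∧ X ∩ M.E ⊆ F}} :=
    ⟨⟨M.E, M.ground_isFlat, inter_subset_right⟩⟩
  exact Matroid.IsFlat.iInter fun F ↦ F.2.1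


/-- preimage of a flat is a flat of the restriction to a subtype. -/
lemma flat_restrictSubtype_of_flat {L : Matroid γ} (hL : L.E = univ) {T : Set γ}
    {F : Set γ} (hF : L.IsFlat F) : (L.restrictSubtype T).IsFlat (Subtype.val ⁻¹' F) := by
  constructor
  · intro I X hIF hIX
    rw [Matroid.restrictSubtype, Matroid.comap_isBasis_iff] at hIF hIX
    obtain ⟨hIF, hinj, hIF'⟩ := hIF
    obtain ⟨hIX, -, hIX'⟩ := hIX
    rw [Matroid.isBasis_restrict_iff'] at hIF hIX
    rw [hL, inter_univ] at hIF hIX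
    have h1 : Subtype.val '' X ⊆ L.closure (Subtype.val '' I) := hIX.1.subset_closure
    have h2 : L.closure (Subtype.val '' I) = L.closure (Subtype.val '' (Subtype.val ⁻¹' F)) :=
      hIF.1.closure_eq_closure
    have h3 : L.closure (Subtype.val '' ((Subtype.val ⁻¹' F) : Set T)) ⊆ F := by
      have : Subtype.val '' ((Subtype.val ⁻¹' F) : Set T) ⊆ F := image_preimage_subset _ _
      calc L.closure (Subtype.val '' ((Subtype.val ⁻¹' F) : Set T)) ⊆ L.closure F :=
            L.closure_subset_closure this
        _ = F := hF.closure
    intro x hx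
    have : (x : γ) ∈ F := (h3 (h2 ▸ h1 ⟨x, hx, rfl⟩))
    exact this
  · rw [Matroid.restrictSubtype_ground]; exact subset_univ _

lemma flat_restrictSubtype_iff {L : Matroid γ} (hL : L.E = univ) {T : Set γ}
    {F' : Set T} :
    (L.restrictSubtype T).IsFlat F' ↔ ∃ F, L.IsFlat F ∧ F' = Subtype.val ⁻¹' F := by
  refine ⟨fun h ↦ ?_, fun ⟨F, hF, hF'⟩ ↦ hF' ▸ flat_restrictSubtype_of_flat hL hF⟩
  refine ⟨L.closure (Subtype.val '' F'), closure_flat' _ _, ?_⟩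
  apply subset_antisymm
  · intro x hx
    exact L.subset_closure _ (by rw [hL]; exact subset_univ _) ⟨x, hx, rfl⟩
  · intro x hx
    -- hx : ↑x ∈ L.closure (val '' F')
    obtain ⟨I₀, hI₀⟩ := L.exists_isBasis (Subtype.val '' F') (by rw [hL]; exact subset_univ _)
    have hxI : (x : γ) ∈ L.closure I₀ := by rwa [hI₀.closure_eq_closure]
    have hIx : L.IsBasis I₀ (insert (x : γ) I₀) :=
      hI₀.indep.insert_isBasis_iff_mem_closure.2 hxI
    have hIins : L.IsBasis I₀ (insert (x : γ) (Subtype.val '' F')) := by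
      have := hIx.isBasis_union hI₀
      rwa [insert_union, union_eq_self_of_subset_left hI₀.subset] at this
    -- lift to the subtype
    set I : Set T := Subtype.val ⁻¹' I₀ with hIdef
    have hI₀T : I₀ ⊆ Subtype.val '' (univ : Set T) := by
      refine hI₀.subset.trans ?_
      exact image_mono (subset_univ _)
    have hIval : Subtype.val '' I = I₀ := by
      rw [hIdef, image_preimage_eq_inter_range, Subtype.range_coe]
      refine inter_eq_self_of_subset_left ?_
      intro y hy
      obtain ⟨t, -, rfl⟩ := hI₀.subset hy
      exact t.2
    have hIsub : I ⊆ F' := by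
      intro a ha
      obtain ⟨b, hb, hba⟩ := hI₀.subset ha
      rwa [← Subtype.val_injective hba]
    have hB1 : (L.restrictSubtype T).IsBasis I F' := by
      rw [Matroid.restrictSubtype, Matroid.comap_isBasis_iff]
      refine ⟨?_, Subtype.val_injective.injOn, hIsub⟩
      rw [Matroid.isBasis_restrict_iff', hL, inter_univ]
      refine ⟨hIval ▸ hI₀, ?_⟩
      rintro y ⟨t, -, rfl⟩; exact t.2
    have hB2 : (L.restrictSubtype T).IsBasis I (insert x F') := by
      rw [Matroid.restrictSubtype, Matroid.comap_isBasis_iff]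
      refine ⟨?_, Subtype.val_injective.injOn, hIsub.trans (subset_insert _ _)⟩
      rw [Matroid.isBasis_restrict_iff', hL, inter_univ]
      constructor
      · rw [image_insert_eq, hIval]; exact hIins
      · rintro y ⟨t, -, rfl⟩; exact t.2
    exact h.subset_of_isBasis_of_isBasis hB1 hB2 (mem_insert _ _)




lemma some_mem_SF {F : Set β} {y : β} :
    some y ∈ insert none (Option.some '' F) ↔ y ∈ F := by simp

lemma IsStrongMap.comp {M : Matroid α} {N : Matroid β} {L : Matroid γ}
    {ψ : Option β → Option γ} {φ : Option α → Option β}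
    (hψ : IsStrongMap N L ψ) (hφ : IsStrongMap M N φ) : IsStrongMap M L (ψ ∘ φ) := by
  refine ⟨by simp [hψ.1, hφ.1], fun F hF ↦ ?_⟩
  have hG := hψ.2 F hF
  have := hφ.2 _ hG
  convert this using 1
  ext x
  simp only [mem_setOf_eq, Function.comp_apply]
  cases hx : φ (some x) with
  | none => simp [hψ.1]
  | some y => simp [some_mem_SF]

lemma isStrongMap_id {M : Matroid α} : IsStrongMap M M id := by
  refine ⟨rfl, fun F hF ↦ ?_⟩
  convert hF using 1
  ext x; simp

/-- the "range" of a strong map on ground sets -/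
def rng (φ : Option α → Option γ) : Set γ := {y | some y ∈ Set.range φ}

lemma nat_card_sigma {ι : Type} [Fintype ι] (f : ι → Type) [∀ i, Finite (f i)] :
    Nat.card (Σ i, f i) = ∑ i, Nat.card (f i) := by
  letI := fun i ↦ Fintype.ofFinite (f i)
  simp [Nat.card_eq_fintype_card]

/-- decomposition of Hom by range -/
lemma card_hom_eq_sum_rng [Fintype α] (M : Matroid α) [Fintype γ] (L : Matroid γ) :
    Nat.card {φ : Option α → Option γ // IsStrongMap M L φ} =
      ∑ T : Set γ, Nat.card {φ : Option α → Option γ // IsStrongMap M L φ ∧ rng φ = T} := by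
  classical
  have e1 : {φ : Option α → Option γ // IsStrongMap M L φ} ≃
      Σ T : Set γ, {φ : {φ : Option α → Option γ // IsStrongMap M L φ} // rng φ.1 = T} :=
    (Equiv.sigmaFiberEquiv (fun φ : {φ : Option α → Option γ // IsStrongMap M L φ} ↦
      rng φ.1)).symm
  haveI : ∀ T : Set γ,
      Finite {φ : {φ : Option α → Option γ // IsStrongMap M L φ} // rng φ.1 = T} := by
    intro T; exact Subtype.finite
  rw [Nat.card_congr e1, nat_card_sigma]
  refine Finset.sum_congr rfl fun T _ ↦ ?_
  exact Nat.card_congr (Equiv.subtypeSubtypeEquivSubtypeInter (IsStrongMap M L) (fun φ ↦ rng φ = T))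



lemma map_val_mem_iff {T : Set γ} {F : Set γ} (o : Option ↥T) :
    Option.map Subtype.val o ∈ insert none (Option.some '' F) ↔
      o ∈ insert none (Option.some '' ((Subtype.val ⁻¹' F) : Set ↥T)) := by
  cases o with
  | none => simp
  | some t => simp

lemma card_rng_eq_restrict [Fintype α] (M : Matroid α) [Fintype γ] (L : Matroid γ)
    (hL : L.E = univ) (T : Set γ) :
    Nat.card {φ : Option α → Option γ // IsStrongMap M L φ ∧ rng φ = T} =
      Nat.card {ψ : Option α → Option ↥T //
        IsStrongMap M (L.restrictSubtype T) ψ ∧ rng ψ = univ} := by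
  classical
  haveI : Fintype ↥T := Fintype.ofFinite _
  have hstrong : ∀ ψ : Option α → Option ↥T, IsStrongMap M (L.restrictSubtype T) ψ →
      IsStrongMap M L (Option.map Subtype.val ∘ ψ) := by
    intro ψ hψ
    refine ⟨by simp [hψ.1], fun F hF ↦ ?_⟩
    have := hψ.2 _ (flat_restrictSubtype_of_flat hL (F := F) (T := T) hF)
    convert this using 1
    ext x
    simp only [mem_setOf_eq, Function.comp_apply]
    exact map_val_mem_iff _
  have hr : ∀ ψ : Option α → Option ↥T, rng ψ = univ →
      rng (Option.map Subtype.val ∘ ψ) = T := by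
    intro ψ hrng
    ext y
    simp only [rng, Set.mem_range, mem_setOf_eq, Function.comp_apply]
    constructor
    · rintro ⟨a, ha⟩
      cases hψa : ψ a with
      | none => rw [hψa] at ha; simp at ha
      | some t =>
        rw [hψa] at ha
        simp only [Option.map_some] at ha
        obtain rfl : (t : γ) = y := by simpa using ha
        exact t.2
    · intro hy
      have : (⟨y, hy⟩ : ↥T) ∈ rng ψ := hrng ▸ mem_univ _
      obtain ⟨a, ha⟩ := this
      exact ⟨a, by rw [ha]; rfl⟩
  refine (Nat.card_eq_of_bijective
    (fun ψ ↦ ⟨Option.map Subtype.val ∘ ψ.1, hstrong ψ.1 ψ.2.1, hr ψ.1 ψ.2.2⟩) ?_).symm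
  constructor
  · -- injective
    rintro ⟨ψ₁, h₁⟩ ⟨ψ₂, h₂⟩ h
    have h' : Option.map Subtype.val ∘ ψ₁ = Option.map Subtype.val ∘ ψ₂ :=
      congrArg Subtype.val h
    refine Subtype.ext (funext fun a ↦ ?_)
    exact Option.map_injective Subtype.val_injective (congrFun h' a)
  · -- surjective
    rintro ⟨φ, hφ, hrng⟩
    have hmem : ∀ a, φ a ∈ insert none (Option.some '' T) := by
      intro a
      cases hφa : φ a with
      | none => simp
      | some y =>
        have : y ∈ rng φ := ⟨a, hφa⟩
        rw [hrng] at this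
        exact mem_insert_of_mem _ ⟨y, this, rfl⟩
    set ψ : Option α → Option ↥T := fun a ↦
      if h : ∃ t : ↥T, φ a = some ↑t then some h.choose else none with hψdef
    have hcomp : Option.map Subtype.val ∘ ψ = φ := by
      funext a
      simp only [Function.comp_apply, hψdef]
      by_cases h : ∃ t : ↥T, φ a = some ↑t
      · rw [dif_pos h]
        have hcs := h.choose_spec
        rw [Option.map_some]
        exact hcs.symm
      · rw [dif_neg h]
        cases hφa : φ a with
        | none => rfl
        | some y =>
          exfalso
          have hy := hmem a
          rw [hφa] at hy
          simp only [mem_insert_iff, reduceCtorEq, mem_image, false_or] at hy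
          obtain ⟨z, hz, hzy⟩ := hy
          exact h ⟨⟨z, hz⟩, by rw [hφa, hzy]⟩
    have hψnone : ψ none = none := by
      simp only [hψdef]
      rw [dif_neg]
      rintro ⟨t, ht⟩
      rw [hφ.1] at ht
      cases ht
    have hψstrong : IsStrongMap M (L.restrictSubtype T) ψ := by
      refine ⟨hψnone, fun F' hF' ↦ ?_⟩
      obtain ⟨F, hF, rfl⟩ := (flat_restrictSubtype_iff hL).1 hF'
      have := hφ.2 F hF
      convert this using 1
      ext x
      simp only [mem_setOf_eq]
      rw [← hcomp]
      exact (map_val_mem_iff (ψ (some x))).symm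
    have hψrng : rng ψ = univ := by
      ext t
      simp only [mem_univ, iff_true, rng, mem_setOf_eq, Set.mem_range]
      have : (t : γ) ∈ rng φ := hrng ▸ t.2
      obtain ⟨a, ha⟩ := this
      rw [← hcomp] at ha
      refine ⟨a, ?_⟩
      have ha' : Option.map Subtype.val (ψ a) = some (t : γ) := ha
      rw [Option.map_eq_some_iff] at ha'
      obtain ⟨t', h1, h2⟩ := ha'
      rw [h1]
      exact congrArg some (Subtype.ext h2)
    exact ⟨⟨ψ, hψstrong, hψrng⟩, Subtype.ext hcomp⟩

lemma card_sur_empty [Fintype α] (M : Matroid α) (hM : M.E = univ) [Fintype γ] (L : Matroid γ)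
    {T : Set γ} (hT : T = ∅) :
    Nat.card {ψ : Option α → Option ↥T //
      IsStrongMap M (L.restrictSubtype T) ψ ∧ rng ψ = univ} = 1 := by
  haveI : IsEmpty ↥T := by rw [hT]; infer_instance
  have hall : ∀ y : Option ↥T, y = none := by
    rintro (_ | t)
    · rfl
    · exact isEmptyElim t
  rw [Nat.card_eq_one_iff_unique]
  constructor
  · constructor
    rintro ⟨ψ₁, -⟩ ⟨ψ₂, -⟩
    refine Subtype.ext (funext fun a ↦ ?_)
    show ψ₁ a = ψ₂ a
    rw [hall (ψ₁ a), hall (ψ₂ a)]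
  · refine ⟨fun _ ↦ none, ⟨rfl, fun F' hF' ↦ ?_⟩, ?_⟩
    · have : {x : α | (none : Option ↥T) ∈ insert none (Option.some '' F')} = univ := by
        ext x; simp
      rw [this, ← hM]
      exact M.ground_isFlat
    · ext t
      exact isEmptyElim t



lemma mapEquiv_flat_iff {M : Matroid α} (f : α ≃ β) {F : Set β} :
    (M.mapEquiv f).IsFlat F ↔ M.IsFlat (f.symm '' F) := by
  constructor
  · rintro ⟨h, hsub⟩
    refine ⟨fun I X hIF hIX ↦ ?_, ?_⟩
    · have h1 : (M.mapEquiv f).IsBasis (f '' I) F := by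
        rw [Matroid.mapEquiv_isBasis_iff, Equiv.symm_image_image]
        exact hIF
      have h2 : (M.mapEquiv f).IsBasis (f '' I) (f '' X) := by
        rw [Matroid.mapEquiv_isBasis_iff, Equiv.symm_image_image, Equiv.symm_image_image]
        exact hIX
      have := h h1 h2
      calc X = f.symm '' (f '' X) := (Equiv.symm_image_image f X).symm
        _ ⊆ f.symm '' F := image_mono this
    · have : f.symm '' F ⊆ f.symm '' ((M.mapEquiv f).E) := image_mono hsub
      rwa [Matroid.mapEquiv_ground_eq, Equiv.symm_image_image] at this
  · rintro ⟨h, hsub⟩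
    refine ⟨fun I X hIF hIX ↦ ?_, ?_⟩
    · rw [Matroid.mapEquiv_isBasis_iff] at hIF hIX
      have := h hIF hIX
      have h2 : f '' (f.symm '' X) ⊆ f '' (f.symm '' F) := image_mono this
      simp only [Equiv.image_symm_image] at h2
      exact h2
    · rw [Matroid.mapEquiv_ground_eq]
      intro y hy
      exact ⟨f.symm y, hsub ⟨y, hy, rfl⟩, by simp⟩

lemma ext_flat {M N : Matroid α} (hE : M.E = N.E) (h : ∀ F, M.IsFlat F ↔ N.IsFlat F) :
    M = N := by
  have hcl : ∀ X, M.closure X = N.closure X := by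
    intro X
    rw [Matroid.closure_def, Matroid.closure_def, hE]
    have hset : {F | M.IsFlat F ∧ X ∩ N.E ⊆ F} = {F | N.IsFlat F ∧ X ∩ N.E ⊆ F} := by
      ext G
      simp only [mem_setOf_eq, h G]
    rw [hset]
  refine Matroid.ext_indep hE fun ⦃I⦄ hI ↦ ?_
  rw [Matroid.indep_iff_forall_notMem_closure_diff hI,
    Matroid.indep_iff_forall_notMem_closure_diff (hE ▸ hI)]
  simp_rw [hcl]

lemma iso_of_flat_iso {M₁ : Matroid α} {M₂ : Matroid β}
    (h₁ : M₁.E = univ) (h₂ : M₂.E = univ) (e : α ≃ β)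
    (h : ∀ F : Set β, M₂.IsFlat F ↔ M₁.IsFlat (e.symm '' F)) : MatroidIso M₁ M₂ := by
  have hM : M₂ = M₁.mapEquiv e := by
    refine ext_flat ?_ fun F ↦ ?_
    · rw [h₂, Matroid.mapEquiv_ground_eq, h₁, image_univ, Equiv.range_eq_univ]
    · rw [mapEquiv_flat_iff]
      exact h F
  exact ⟨e, fun B ↦ by
    rw [hM, Matroid.mapEquiv_isBase_iff, Equiv.symm_image_image]⟩

lemma flat_iso_of_iso {M₁ : Matroid α} {M₂ : Matroid β}
    (h₁ : M₁.E = univ) (h₂ : M₂.E = univ) (e : α ≃ β)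
    (he : ∀ B : Set α, M₁.IsBase B ↔ M₂.IsBase (e '' B)) :
    ∀ F : Set β, M₂.IsFlat F ↔ M₁.IsFlat (e.symm '' F) := by
  have hM : M₂ = M₁.mapEquiv e := by
    refine Matroid.ext_isBase ?_ fun ⦃B⦄ _ ↦ ?_
    · rw [h₂, Matroid.mapEquiv_ground_eq, h₁, image_univ, Equiv.range_eq_univ]
    · rw [Matroid.mapEquiv_isBase_iff]
      have := he (e.symm '' B)
      rw [Equiv.image_symm_image] at this
      exact this.symm
  intro F
  rw [hM, mapEquiv_flat_iff]


/-- The key induction: equality of hom-counts gives equality of counts of homs with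
prescribed range. -/
lemma key_rng [Fintype α] [Fintype β] (M₁ : Matroid α) (M₂ : Matroid β)
    (h₁ : M₁.E = univ) (h₂ : M₂.E = univ)
    (H : ∀ (γ : Type) [Fintype γ] [Nonempty γ] (L : Matroid γ), L.E = univ →
      Nat.card {φ : Option α → Option γ // IsStrongMap M₁ L φ} =
      Nat.card {φ : Option β → Option γ // IsStrongMap M₂ L φ}) :
    ∀ (n : ℕ) (γ : Type) [Fintype γ] (L : Matroid γ), L.E = univ →
      ∀ T : Set γ, T.ncard = n →
      Nat.card {φ : Option α → Option γ // IsStrongMap M₁ L φ ∧ rng φ = T} =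
      Nat.card {φ : Option β → Option γ // IsStrongMap M₂ L φ ∧ rng φ = T} := by
  intro n
  induction n using Nat.strong_induction_on with
  | _ n IH =>
  intro γ _ L hL T hT
  classical
  rw [card_rng_eq_restrict M₁ L hL T, card_rng_eq_restrict M₂ L hL T]
  by_cases hne : T = ∅
  · rw [card_sur_empty M₁ h₁ L hne, card_sur_empty M₂ h₂ L hne]
  · haveI : Nonempty ↥T := (Set.nonempty_iff_ne_empty.2 hne).to_subtype
    haveI : Fintype ↥T := Fintype.ofFinite _
    set L' := L.restrictSubtype T with hL'def
    have hL' : L'.E = univ := L.restrictSubtype_ground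
    have hHom := H ↥T L' hL'
    rw [card_hom_eq_sum_rng M₁ L', card_hom_eq_sum_rng M₂ L'] at hHom
    rw [← Finset.add_sum_erase Finset.univ _ (Finset.mem_univ (univ : Set ↥T)),
      ← Finset.add_sum_erase Finset.univ
        (fun S ↦ Nat.card {φ : Option β → Option ↥T // IsStrongMap M₂ L' φ ∧ rng φ = S})
        (Finset.mem_univ (univ : Set ↥T))] at hHom
    have hsmall : ∀ S ∈ (Finset.univ : Finset (Set ↥T)).erase univ,
        Nat.card {φ : Option α → Option ↥T // IsStrongMap M₁ L' φ ∧ rng φ = S} =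
        Nat.card {φ : Option β → Option ↥T // IsStrongMap M₂ L' φ ∧ rng φ = S} := by
      intro S hS
      have hSne : S ≠ univ := (Finset.mem_erase.1 hS).1
      have hlt : S.ncard < n := by
        have h1 : S.ncard < (univ : Set ↥T).ncard :=
          Set.ncard_lt_ncard (ssubset_univ_iff.2 hSne) finite_univ
        rwa [ncard_univ, Nat.card_coe_set_eq, hT] at h1
      exact IH S.ncard hlt ↥T L' hL' S rfl
    rw [Finset.sum_congr rfl hsmall] at hHom
    exact Nat.add_right_cancel hHom

end StrongAux

open StrongAux

/-- Two matroids on nonempty finite ground sets are isomorphic iff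
they admit the same number of strong maps into every matroid on a nonempty finite
ground set. -/
theorem matroidIso_iff_card_hom_eq {α β : Type}
    [Fintype α] [Nonempty α] [Fintype β] [Nonempty β]
    (M₁ : Matroid α) (M₂ : Matroid β) (h₁ : M₁.E = Set.univ) (h₂ : M₂.E = Set.univ) :
    MatroidIso M₁ M₂ ↔
      ∀ (γ : Type) [Fintype γ] [Nonempty γ] (L : Matroid γ), L.E = Set.univ →
        Nat.card {φ : Option α → Option γ // IsStrongMap M₁ L φ} =
        Nat.card {φ : Option β → Option γ // IsStrongMap M₂ L φ} := by
  constructor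
  · rintro ⟨e, he⟩ γ _ _ L hL
    have hf := flat_iso_of_iso h₁ h₂ e he
    -- `Option.map e` is a strong map M₁ → M₂, `Option.map e.symm` one in the other direction
    have hs₁ : IsStrongMap M₁ M₂ (Option.map e) := by
      refine ⟨rfl, fun F hF ↦ ?_⟩
      have : {x : α | Option.map e (some x) ∈ insert none (Option.some '' F)}
          = e.symm '' F := by
        ext x
        simp only [mem_setOf_eq, Option.map_some, some_mem_SF]
        constructor
        · intro hx; exact ⟨e x, hx, by simp⟩
        · rintro ⟨y, hy, rfl⟩; simpa using hy
      rw [this]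
      exact (hf F).1 hF
    have hs₂ : IsStrongMap M₂ M₁ (Option.map e.symm) := by
      refine ⟨rfl, fun G hG ↦ ?_⟩
      have : {y : β | Option.map e.symm (some y) ∈ insert none (Option.some '' G)}
          = e '' G := by
        ext y
        simp only [mem_setOf_eq, Option.map_some, some_mem_SF]
        constructor
        · intro hy; exact ⟨e.symm y, hy, by simp⟩
        · rintro ⟨x, hx, rfl⟩; simpa using hx
      rw [this]
      refine (hf (e '' G)).2 ?_
      rwa [Equiv.symm_image_image]
    refine Nat.card_congr ?_
    refine
      { toFun := fun φ ↦ ⟨φ.1 ∘ Option.map e.symm, IsStrongMap.comp φ.2 hs₂⟩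
        invFun := fun φ ↦ ⟨φ.1 ∘ Option.map e, IsStrongMap.comp φ.2 hs₁⟩
        left_inv := ?_
        right_inv := ?_ }
    · rintro ⟨φ, hφ⟩
      refine Subtype.ext (funext fun a ↦ ?_)
      show φ (Option.map e.symm (Option.map e a)) = φ a
      rw [Option.map_map]
      simp
    · rintro ⟨φ, hφ⟩
      refine Subtype.ext (funext fun a ↦ ?_)
      show φ (Option.map e (Option.map e.symm a)) = φ a
      rw [Option.map_map]
      simp
  · intro H
    -- get surjective strong maps both ways
    have key₁₂ := key_rng M₁ M₂ h₁ h₂ H (univ : Set β).ncard β M₂ h₂ univ rfl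
    have H' : ∀ (γ : Type) [Fintype γ] [Nonempty γ] (L : Matroid γ), L.E = Set.univ →
        Nat.card {φ : Option β → Option γ // IsStrongMap M₂ L φ} =
        Nat.card {φ : Option α → Option γ // IsStrongMap M₁ L φ} := by
      intro γ _ _ L hL
      exact (H γ L hL).symm
    have key₂₁ := key_rng M₂ M₁ h₂ h₁ H' (univ : Set α).ncard α M₁ h₁ univ rfl
    have hrng_id : ∀ (δ : Type), rng (id : Option δ → Option δ) = univ := by
      intro δ
      ext y
      simp [rng]
    have hpos₂ : 0 < Nat.card {φ : Option β → Option β // IsStrongMap M₂ M₂ φ ∧ rng φ = univ} := by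
      haveI : Nonempty {φ : Option β → Option β // IsStrongMap M₂ M₂ φ ∧ rng φ = univ} :=
        ⟨⟨id, isStrongMap_id, hrng_id β⟩⟩
      exact Nat.card_pos
    have hpos₁ : 0 < Nat.card {φ : Option α → Option α // IsStrongMap M₁ M₁ φ ∧ rng φ = univ} := by
      haveI : Nonempty {φ : Option α → Option α // IsStrongMap M₁ M₁ φ ∧ rng φ = univ} :=
        ⟨⟨id, isStrongMap_id, hrng_id α⟩⟩
      exact Nat.card_pos
    rw [← key₁₂] at hpos₂
    rw [← key₂₁] at hpos₁
    obtain ⟨φ, hφs, hφr⟩ := (Nat.card_pos_iff.1 hpos₂).1.some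
    obtain ⟨ψ, hψs, hψr⟩ := (Nat.card_pos_iff.1 hpos₁).1.some
    -- φ and ψ are surjective, hence bijective
    have hφsurj : Function.Surjective φ := by
      rintro (_ | y)
      · exact ⟨none, hφs.1⟩
      · have : y ∈ rng φ := hφr ▸ mem_univ y
        exact this
    have hψsurj : Function.Surjective ψ := by
      rintro (_ | x)
      · exact ⟨none, hψs.1⟩
      · have : x ∈ rng ψ := hψr ▸ mem_univ x
        exact this
    have hcard : Fintype.card (Option α) = Fintype.card (Option β) :=
      le_antisymm (Fintype.card_le_of_surjective ψ hψsurj)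
        (Fintype.card_le_of_surjective φ hφsurj)
    have hφbij : Function.Bijective φ :=
      (Fintype.bijective_iff_surjective_and_card φ).2 ⟨hφsurj, hcard⟩
    have hψbij : Function.Bijective ψ :=
      (Fintype.bijective_iff_surjective_and_card ψ).2 ⟨hψsurj, hcard.symm⟩
    set e₀ : Option α ≃ Option β := Equiv.ofBijective φ hφbij with he₀
    set d₀ : Option β ≃ Option α := Equiv.ofBijective ψ hψbij with hd₀
    have he₀none : e₀ none = none := hφs.1
    have hd₀none : d₀ none = none := hψs.1
    set e : α ≃ β := Equiv.removeNone e₀ with he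
    set d : β ≃ α := Equiv.removeNone d₀ with hd
    have heφ : ∀ x : α, φ (some x) = some (e x) := by
      intro x
      have hne : e₀ (some x) ≠ none := by
        intro hcon
        exact (Option.some_ne_none x) (e₀.injective (hcon.trans he₀none.symm))
      obtain ⟨y, hy⟩ := Option.ne_none_iff_exists'.1 hne
      have := Equiv.removeNone_some e₀ ⟨y, hy⟩
      exact this.symm
    have hdψ : ∀ y : β, ψ (some y) = some (d y) := by
      intro y
      have hne : d₀ (some y) ≠ none := by
        intro hcon
        exact (Option.some_ne_none y) (d₀.injective (hcon.trans hd₀none.symm))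
      obtain ⟨x, hx⟩ := Option.ne_none_iff_exists'.1 hne
      have := Equiv.removeNone_some d₀ ⟨x, hx⟩
      exact this.symm
    -- flats transfer (one direction each)
    have hflat₂₁ : ∀ F : Set β, M₂.IsFlat F → M₁.IsFlat (e.symm '' F) := by
      intro F hF
      have := hφs.2 F hF
      have hset : {x : α | φ (some x) ∈ insert none (Option.some '' F)} = e.symm '' F := by
        ext x
        simp only [mem_setOf_eq, heφ x, some_mem_SF]
        constructor
        · intro hx; exact ⟨e x, hx, by simp⟩
        · rintro ⟨y, hy, rfl⟩; simpa using hy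
      rwa [hset] at this
    have hflat₁₂ : ∀ G : Set α, M₁.IsFlat G → M₂.IsFlat (d.symm '' G) := by
      intro G hG
      have := hψs.2 G hG
      have hset : {y : β | ψ (some y) ∈ insert none (Option.some '' G)} = d.symm '' G := by
        ext y
        simp only [mem_setOf_eq, hdψ y, some_mem_SF]
        constructor
        · intro hy; exact ⟨d y, hy, by simp⟩
        · rintro ⟨x, hx, rfl⟩; simpa using hx
      rwa [hset] at this
    -- counting flats: the transfer map is a bijection
    classical
    haveI : Fintype {F : Set β // M₂.IsFlat F} := Fintype.ofFinite _
    haveI : Fintype {G : Set α // M₁.IsFlat G} := Fintype.ofFinite _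
    set u : {F : Set β // M₂.IsFlat F} → {G : Set α // M₁.IsFlat G} :=
      fun F ↦ ⟨e.symm '' F.1, hflat₂₁ F.1 F.2⟩ with hu
    set v : {G : Set α // M₁.IsFlat G} → {F : Set β // M₂.IsFlat F} :=
      fun G ↦ ⟨d.symm '' G.1, hflat₁₂ G.1 G.2⟩ with hv
    have huinj : Function.Injective u := by
      rintro ⟨F₁, hF₁⟩ ⟨F₂, hF₂⟩ h
      have h' : e.symm '' F₁ = e.symm '' F₂ := congrArg Subtype.val h
      have := congrArg (fun S ↦ e '' S) h'
      simp only [Equiv.image_symm_image] at this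
      exact Subtype.ext this
    have hvinj : Function.Injective v := by
      rintro ⟨G₁, hG₁⟩ ⟨G₂, hG₂⟩ h
      have h' : d.symm '' G₁ = d.symm '' G₂ := congrArg Subtype.val h
      have := congrArg (fun S ↦ d '' S) h'
      simp only [Equiv.image_symm_image] at this
      exact Subtype.ext this
    have hcards : Fintype.card {F : Set β // M₂.IsFlat F} =
        Fintype.card {G : Set α // M₁.IsFlat G} :=
      le_antisymm (Fintype.card_le_of_injective u huinj)
        (Fintype.card_le_of_injective v hvinj)
    have husurj : Function.Surjective u :=
      ((Fintype.bijective_iff_injective_and_card u).2 ⟨huinj, hcards⟩).2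
    -- full flat correspondence
    have hflats : ∀ F : Set β, M₂.IsFlat F ↔ M₁.IsFlat (e.symm '' F) := by
      intro F
      refine ⟨hflat₂₁ F, fun hG ↦ ?_⟩
      obtain ⟨⟨F', hF'⟩, hFF⟩ := husurj ⟨e.symm '' F, hG⟩
      have h' : e.symm '' F' = e.symm '' F := congrArg Subtype.val hFF
      have := congrArg (fun S ↦ e '' S) h'
      simp only [Equiv.image_symm_image] at this
      rwa [← this]
    exact iso_of_flat_iso h₁ h₂ e hflats
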